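/- For 0 \le i, j \le d with j - i \ge 2, the following operator vanishes on F_jV: \sum_{i\le s\le j} \theta_s \mathcal{L}^{s-i}/\prod_{k=i+1}^s(\theta^*_i-\theta^*_k) \cdot \mathcal{L}^{j-s}/\prod_{k=s}^{j-1}(\theta^*_j-\theta^*_k) + \sum_{(r,s): i\le r\le d, 0\le s\le j, r-s=1} \mathcal{L}^{r-i}/\prod_{k=i+1}^r(\theta^*_i-\theta^*_k) \cdot \mathcal{R} \cdot \mathcal{L}^{j-s}/\prod_{k=s}^{j-1}(\theta^*_j-\theta^*_k). -/

import Mathlib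

/-- For `j - i ≥ 2`, the operator combination of `𝓡, 𝓛` from the
expansion formula vanishes on `F_jV` (Theorem 9.1 of the paper). -/
theorem stmt11 {F V : Type*} [Field F] [AddCommGroup V] [Module F V]
    [FiniteDimensional F V] (d : ℕ) (hd : 1 ≤ d)
    (A As : Module.End F V) (Es Fi : ℕ → Module.End F V) (θ θs : ℕ → F)
    (cR cL : Module.End F V)
    (hEsEs : ∀ i ≤ d, ∀ j ≤ d, Es i * Es j = if i = j then Es i else 0)
    (hFF : ∀ i ≤ d, ∀ j ≤ d, Fi i * Fi j = if i = j then Fi i else 0)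
    (hEssum : ∑ i ∈ Finset.range (d + 1), Es i = 1)
    (hFsum : ∑ i ∈ Finset.range (d + 1), Fi i = 1)
    (hθsdist : ∀ i ≤ d, ∀ j ≤ d, i ≠ j → θs i ≠ θs j)
    (hcR : cR = A - ∑ i ∈ Finset.range (d + 1), θ i • Fi i)
    (hcL : cL = As - ∑ i ∈ Finset.range (d + 1), θs i • Fi i)
    (hEAE : ∀ i ≤ d, ∀ j ≤ d, (i + 2 ≤ j ∨ j + 2 ≤ i) → Es i * A * Es j = 0)
    (hFEF : ∀ i ≤ d, Fi i * Es i * Fi i = Fi i)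
    (hcomp : ∀ i ≤ d, ∀ j ≤ d,
      Fi i * Es i * A * Es j =
        (∑ s ∈ Finset.Icc i j,
          (θ s * (∏ k ∈ Finset.Ioc i s, (θs i - θs k))⁻¹ *
            (∏ k ∈ Finset.Ico s j, (θs j - θs k))⁻¹) •
              (cL ^ (s - i) * cL ^ (j - s) * (Fi j * Es j)))
        + ∑ s ∈ (Finset.range (j + 1)).filter (fun s => i ≤ s + 1 ∧ s + 1 ≤ d),
            ((∏ k ∈ Finset.Ioc i (s + 1), (θs i - θs k))⁻¹ *
              (∏ k ∈ Finset.Ico s j, (θs j - θs k))⁻¹) •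
                (cL ^ (s + 1 - i) * cR * cL ^ (j - s) * (Fi j * Es j))) :
    ∀ i j, i ≤ d → j ≤ d → i + 2 ≤ j →
      ((∑ s ∈ Finset.Icc i j,
          (θ s * (∏ k ∈ Finset.Ioc i s, (θs i - θs k))⁻¹ *
            (∏ k ∈ Finset.Ico s j, (θs j - θs k))⁻¹) •
              (cL ^ (s - i) * cL ^ (j - s)))
        + ∑ s ∈ (Finset.range (j + 1)).filter (fun s => i ≤ s + 1 ∧ s + 1 ≤ d),
            ((∏ k ∈ Finset.Ioc i (s + 1), (θs i - θs k))⁻¹ *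
              (∏ k ∈ Finset.Ico s j, (θs j - θs k))⁻¹) •
                (cL ^ (s + 1 - i) * cR * cL ^ (j - s))) * Fi j = 0 := by
  intro i j hi hj hij
  have hF : Fi j * Es j * Fi j = Fi j := hFEF j hj
  have h0 : (Fi i * Es i * A * Es j) * Fi j = 0 := by
    rw [show Fi i * Es i * A * Es j = Fi i * (Es i * A * Es j) by noncomm_ring,
        hEAE i hi j hj (Or.inl hij), mul_zero, zero_mul]
  have hF' : Fi j * (Es j * Fi j) = Fi j := by rw [← mul_assoc, hF]
  rw [← h0, hcomp i hi j hj]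
  simp only [add_mul, Finset.sum_mul, smul_mul_assoc, mul_assoc, hF']
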